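/- Let q ≥ 1, s ≥ 2, and a ≥ 1 be integers, and let G be a graph with |V(G)| ≥ a·C(a,s)·q + a^s·R(s, ω(G)+1), where C(a,s) denotes the binomial coefficient 'a choose s'. Then either α(G) > a, or G contains a stable set I of size s such that the subgraph of G induced on the common neighbourhood ∩_{v∈I} N_G(v) has chromatic number greater than q. -/

import Mathlib

open SimpleGraph

/-- The chromatic number of a graph as a natural number. -/
noncomputable def chromNum {V : Type*} (G : SimpleGraph V) : ℕ :=
  G.chromaticNumber.toNat

/-- The stability (independence) number of a graph. -/
noncomputable def indepNum {V : Type*} (G : SimpleGraph V) : ℕ := Gᶜ.cliqueNum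

/-- A stable (independent) set in a graph. -/
def IsStableSet {V : Type*} (G : SimpleGraph V) (S : Finset V) : Prop :=
  ∀ u ∈ S, ∀ v ∈ S, ¬ G.Adj u v

/-- The Ramsey number `R(s,w)`: the least `n ≥ 1` such that every graph on `n`
vertices contains a stable set of size `s` or a clique of size `w`. -/
noncomputable def ramsey (s w : ℕ) : ℕ :=
  sInf {n : ℕ | 1 ≤ n ∧ ∀ G : SimpleGraph (Fin n),
    (∃ S : Finset (Fin n), IsStableSet G S ∧ S.card = s) ∨
    (∃ S : Finset (Fin n), G.IsNClique w S)}

/-- `G` has no induced subgraph isomorphic to `H`. -/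
def IndFree {W V : Type*} (H : SimpleGraph W) (G : SimpleGraph V) : Prop :=
  ¬ Nonempty (H ↪g G)

private lemma stable_insert {V : Type*} [DecidableEq V] {G : SimpleGraph V} {S : Finset V} {v : V}
    (hS : IsStableSet G S) (hv : ∀ u ∈ S, ¬ G.Adj v u) : IsStableSet G (insert v S) := by
  intro x hx y hy hadj
  rcases Finset.mem_insert.1 hx with hxv | hxS
  · rcases Finset.mem_insert.1 hy with hyv | hyS
    · subst hxv; subst hyv; exact G.loopless.irrefl _ hadj
    · subst hxv; exact hv y hyS hadj
  · rcases Finset.mem_insert.1 hy with hyv | hyS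
    · subst hyv; exact hv x hxS hadj.symm
    · exact hS x hxS y hyS hadj

private lemma lift_stable {V : Type*} {G : SimpleGraph V} {T : Finset V}
    {S' : Finset ↥T} (h : IsStableSet (G.comap (Subtype.val : ↥T → V)) S') :
    ∃ S : Finset V, S ⊆ T ∧ IsStableSet G S ∧ S.card = S'.card := by
  classical
  refine ⟨S'.map (Function.Embedding.subtype _), ?_, ?_, Finset.card_map _⟩
  · intro u hu
    obtain ⟨x, hx, rfl⟩ := Finset.mem_map.1 hu
    exact x.2
  · intro u hu v hv
    obtain ⟨x, hx, rfl⟩ := Finset.mem_map.1 hu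
    obtain ⟨y, hy, rfl⟩ := Finset.mem_map.1 hv
    exact h x hx y hy

private lemma lift_clique {V : Type*} {G : SimpleGraph V} {T : Finset V} {w : ℕ}
    {S' : Finset ↥T} (h : (G.comap (Subtype.val : ↥T → V)).IsNClique w S') :
    ∃ S : Finset V, S ⊆ T ∧ G.IsNClique w S := by
  classical
  refine ⟨S'.map (Function.Embedding.subtype _), ?_, ?_, ?_⟩
  · intro u hu
    obtain ⟨x, hx, rfl⟩ := Finset.mem_map.1 hu
    exact x.2
  · intro u hu v hv huv
    simp only [Finset.coe_map, Set.mem_image, Finset.mem_coe] at hu hv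
    obtain ⟨x, hx, rfl⟩ := hu
    obtain ⟨y, hy, rfl⟩ := hv
    exact h.1 (Finset.mem_coe.2 hx) (Finset.mem_coe.2 hy) (fun e => huv (by rw [e]))
  · rw [Finset.card_map]; exact h.2

private def rb : ℕ → ℕ → ℕ
  | 0, _ => 1
  | _ + 1, 0 => 1
  | s + 1, w + 1 => rb s (w + 1) + rb (s + 1) w

private lemma rb_pos (s w : ℕ) : 1 ≤ rb s w := by
  match s, w with
  | 0, _ => simp [rb]
  | _ + 1, 0 => simp [rb]
  | s + 1, w + 1 =>
    have := rb_pos s (w + 1)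
    simp only [rb]
    omega

private lemma rb_spec : ∀ (n s w : ℕ), s + w = n → ∀ (V : Type) [Fintype V] (G : SimpleGraph V),
    rb s w ≤ Fintype.card V →
    (∃ S : Finset V, IsStableSet G S ∧ S.card = s) ∨ (∃ S : Finset V, G.IsNClique w S) := by
  intro n
  induction n with
  | zero =>
    intro s w hsw V _ G _
    obtain ⟨rfl, rfl⟩ : s = 0 ∧ w = 0 := by omega
    exact Or.inl ⟨∅, fun u hu => (Finset.notMem_empty u hu).elim, rfl⟩
  | succ n ih =>
    intro s w hsw V _ G hcard
    classical
    match s, w with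
    | 0, w => exact Or.inl ⟨∅, fun u hu => (Finset.notMem_empty u hu).elim, rfl⟩
    | s + 1, 0 => exact Or.inr ⟨∅, SimpleGraph.isNClique_empty.mpr rfl⟩
    | s + 1, w + 1 =>
      have h1 : 1 ≤ rb (s + 1) (w + 1) := rb_pos _ _
      have hV : 0 < Fintype.card V := lt_of_lt_of_le h1 hcard
      obtain ⟨v⟩ := Fintype.card_pos_iff.mp hV
      set Nb : Finset V := Finset.univ.filter (fun u => G.Adj v u) with hNb
      set Mb : Finset V := Finset.univ.filter (fun u => ¬ G.Adj v u ∧ u ≠ v) with hMb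
      have hcards : Fintype.card V = Nb.card + (Mb.card + 1) := by
        rw [← Finset.card_univ,
          ← Finset.card_filter_add_card_filter_not (s := Finset.univ)
            (p := fun u => G.Adj v u)]
        congr 1
        have hins : Finset.univ.filter (fun u => ¬ G.Adj v u) = insert v Mb := by
          ext u
          by_cases hu : u = v <;> simp [hMb, hu]
        rw [hins, Finset.card_insert_of_notMem (by simp [hMb])]
      have hcard' : rb s (w + 1) + rb (s + 1) w ≤ Fintype.card V := by
        simpa [rb] using hcard
      have hsplit : rb s (w + 1) ≤ Mb.card ∨ rb (s + 1) w ≤ Nb.card := by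
        by_contra hc
        push_neg at hc
        omega
      rcases hsplit with hM | hN
      · have := ih s (w + 1) (by omega) ↥Mb (G.comap Subtype.val) (by rwa [Fintype.card_coe])
        rcases this with ⟨S', hS', hScard⟩ | ⟨S', hS'⟩
        · obtain ⟨S, hST, hSst, hScard'⟩ := lift_stable hS'
          refine Or.inl ⟨insert v S, ?_, ?_⟩
          · refine stable_insert hSst ?_
            intro u hu
            have h2 := hST hu
            rw [hMb, Finset.mem_filter] at h2
            exact h2.2.1
          · have hvS : v ∉ S := by
              intro hv
              have h2 := hST hv
              rw [hMb, Finset.mem_filter] at h2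
              exact h2.2.2 rfl
            rw [Finset.card_insert_of_notMem hvS, hScard', hScard]
        · obtain ⟨S, _, hS⟩ := lift_clique hS'
          exact Or.inr ⟨S, hS⟩
      · have := ih (s + 1) w (by omega) ↥Nb (G.comap Subtype.val) (by rwa [Fintype.card_coe])
        rcases this with ⟨S', hS', hScard⟩ | ⟨S', hS'⟩
        · obtain ⟨S, _, hSst, hScard'⟩ := lift_stable hS'
          exact Or.inl ⟨S, hSst, by rw [hScard', hScard]⟩
        · obtain ⟨S, hST, hS⟩ := lift_clique hS'
          have hadjS : ∀ u ∈ S, G.Adj v u := by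
            intro u hu
            have h2 := hST hu
            rw [hNb, Finset.mem_filter] at h2
            exact h2.2
          have hvS : v ∉ S := fun hv => G.loopless.irrefl v (hadjS v hv)
          refine Or.inr ⟨insert v S, ?_, ?_⟩
          · rw [Finset.coe_insert]
            exact hS.1.insert (fun b hb _ => hadjS b (Finset.mem_coe.1 hb))
          · rw [Finset.card_insert_of_notMem hvS, hS.2]

private lemma ramsey_mem (s w : ℕ) :
    1 ≤ ramsey s w ∧ ∀ G : SimpleGraph (Fin (ramsey s w)),
      (∃ S : Finset (Fin (ramsey s w)), IsStableSet G S ∧ S.card = s) ∨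
      (∃ S : Finset (Fin (ramsey s w)), G.IsNClique w S) := by
  have : ramsey s w ∈ {n : ℕ | 1 ≤ n ∧ ∀ G : SimpleGraph (Fin n),
      (∃ S : Finset (Fin n), IsStableSet G S ∧ S.card = s) ∨
      (∃ S : Finset (Fin n), G.IsNClique w S)} := by
    apply Nat.sInf_mem
    exact ⟨rb s w, rb_pos s w, fun G => rb_spec (s + w) s w rfl (Fin (rb s w)) G (by simp)⟩
  exact this

private lemma ramsey_pos (s w : ℕ) : 1 ≤ ramsey s w := (ramsey_mem s w).1

private lemma ramsey_spec (s w : ℕ) (V : Type) [Fintype V] (G : SimpleGraph V)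
    (h : ramsey s w ≤ Fintype.card V) :
    (∃ S : Finset V, IsStableSet G S ∧ S.card = s) ∨ (∃ S : Finset V, G.IsNClique w S) := by
  classical
  obtain ⟨-, hall⟩ := ramsey_mem s w
  have hcle : Fintype.card (Fin (ramsey s w)) ≤ Fintype.card V := by simpa using h
  obtain ⟨f⟩ := Function.Embedding.nonempty_of_card_le hcle
  rcases hall (G.comap f) with ⟨S', hst, hcd⟩ | ⟨S', hcl⟩
  · refine Or.inl ⟨S'.map f, ?_, by rw [Finset.card_map, hcd]⟩
    intro u hu v hv
    obtain ⟨x, hx, rfl⟩ := Finset.mem_map.1 hu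
    obtain ⟨y, hy, rfl⟩ := Finset.mem_map.1 hv
    exact hst x hx y hy
  · refine Or.inr ⟨S'.map f, ?_, by rw [Finset.card_map]; exact hcl.2⟩
    intro u hu v hv huv
    simp only [Finset.coe_map, Set.mem_image, Finset.mem_coe] at hu hv
    obtain ⟨x, hx, rfl⟩ := hu
    obtain ⟨y, hy, rfl⟩ := hv
    exact hcl.1 (Finset.mem_coe.2 hx) (Finset.mem_coe.2 hy) (fun e => huv (by rw [e]))

private lemma ramsey_subset {V : Type} [Fintype V] (G : SimpleGraph V) (s w : ℕ) (T : Finset V)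
    (h : ramsey s w ≤ T.card) :
    (∃ S : Finset V, S ⊆ T ∧ IsStableSet G S ∧ S.card = s) ∨
    (∃ S : Finset V, G.IsNClique w S) := by
  classical
  rcases ramsey_spec s w ↥T (G.comap Subtype.val) (by rwa [Fintype.card_coe]) with
    ⟨S', h1, h2⟩ | ⟨S', h'⟩
  · obtain ⟨S, hST, hSst, hc⟩ := lift_stable h1
    exact Or.inl ⟨S, hST, hSst, by rw [hc, h2]⟩
  · obtain ⟨S, _, hS⟩ := lift_clique h'
    exact Or.inr ⟨S, hS⟩

private lemma stable_color_count {V : Type} [Fintype V] (G : SimpleGraph V) (p : Set V)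
    (hfin : p.Finite) (q a : ℕ) (hcol : (G.induce p).Colorable q)
    (hstab : ∀ S : Finset V, IsStableSet G S → S.card ≤ a) :
    hfin.toFinset.card ≤ q * a := by
  classical
  haveI := hfin.fintype
  obtain ⟨C⟩ := hcol
  have hinj : hfin.toFinset.card = (Finset.univ : Finset ↥p).card := by
    rw [Set.Finite.card_toFinset, Finset.card_univ]
  rw [hinj]
  have hfw : ∀ x ∈ (Finset.univ : Finset ↥p), C x ∈ (Finset.univ : Finset (Fin q)) :=
    fun x _ => Finset.mem_univ _
  rw [Finset.card_eq_sum_card_fiberwise hfw]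
  have hb : ∀ b ∈ (Finset.univ : Finset (Fin q)),
      (Finset.univ.filter (fun x : ↥p => C x = b)).card ≤ a := by
    intro b _
    have hst : IsStableSet G
        ((Finset.univ.filter (fun x : ↥p => C x = b)).image Subtype.val) := by
      intro u hu v hv hadj
      obtain ⟨x, hx, rfl⟩ := Finset.mem_image.1 hu
      obtain ⟨y, hy, rfl⟩ := Finset.mem_image.1 hv
      have hxy : (G.induce p).Adj x y := hadj
      have hne := C.valid hxy
      rw [Finset.mem_filter] at hx hy
      exact hne (hx.2.trans hy.2.symm)
    have h2 := hstab _ hst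
    rwa [Finset.card_image_of_injective _ Subtype.val_injective] at h2
  have h3 := Finset.sum_le_card_nsmul (Finset.univ : Finset (Fin q)) _ a hb
  simpa using h3

/-- for integers `q ≥ 1`, `s ≥ 2`, `a ≥ 1` and every graph `G`
with `|V(G)| ≥ a·(a choose s)·q + a^s·R(s, ω(G)+1)`, either `α(G) > a`, or `G`
contains a stable set `I` of size `s` whose common neighbourhood induces a
subgraph of chromatic number greater than `q`. -/
theorem stmt19 (q s a : ℕ) (hq : 1 ≤ q) (hs : 2 ≤ s) (ha : 1 ≤ a)
    (V : Type) [Fintype V] (G : SimpleGraph V)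
    (hcard : a * Nat.choose a s * q + a ^ s * ramsey s (G.cliqueNum + 1)
      ≤ Fintype.card V) :
    a < _root_.indepNum G ∨
    ∃ I : Finset V, IsStableSet G I ∧ I.card = s ∧
      q < chromNum (G.induce (⋂ v ∈ I, G.neighborSet v)) := by
  classical
  by_contra hcon
  push_neg at hcon
  obtain ⟨hα, hI⟩ := hcon
  set D := ramsey s (G.cliqueNum + 1) with hD
  have hD1 : 1 ≤ D := ramsey_pos _ _
  -- every stable set has size at most `indepNum G`
  have hstable_le : ∀ S : Finset V, IsStableSet G S → S.card ≤ _root_.indepNum G := by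
    intro S hS
    have hcl : Gᶜ.IsClique ↑S := by
      intro u hu v hv huv
      exact ⟨huv, hS u (Finset.mem_coe.1 hu) v (Finset.mem_coe.1 hv)⟩
    simpa [_root_.indepNum] using SimpleGraph.IsClique.card_le_cliqueNum (G := Gᶜ) (tc := hcl)
  have hstable_le_a : ∀ S : Finset V, IsStableSet G S → S.card ≤ a :=
    fun S h => (hstable_le S h).trans hα
  -- no clique of size `cliqueNum + 1`
  have hclique : ¬ ∃ S : Finset V, G.IsNClique (G.cliqueNum + 1) S := by
    rintro ⟨S, hS⟩
    have h1 : S.card ≤ G.cliqueNum := SimpleGraph.IsClique.card_le_cliqueNum (tc := hS.1)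
    rw [hS.2] at h1
    omega
  -- a maximum stable set `A`
  obtain ⟨A, hA⟩ := Gᶜ.exists_isNClique_cliqueNum
  have hAcard : A.card = _root_.indepNum G := hA.2
  have hAstable : IsStableSet G A := by
    intro u hu v hv hadj
    by_cases huv : u = v
    · exact G.loopless.irrefl v (huv ▸ hadj)
    · exact (hA.1 (Finset.mem_coe.2 hu) (Finset.mem_coe.2 hv) huv).2 hadj
  have hAa : A.card ≤ a := by rw [hAcard]; exact hα
  have hAmax : ∀ v, v ∉ A → ∃ u ∈ A, G.Adj v u := by
    intro v hv
    by_contra hno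
    push_neg at hno
    have hst : IsStableSet G (insert v A) := stable_insert hAstable hno
    have h2 := hstable_le _ hst
    rw [Finset.card_insert_of_notMem hv, hAcard] at h2
    omega
  -- `D ≤ |V|`, hence `G` has a stable set of size `s`, hence `s ≤ |A|`
  have hDcard : D ≤ Fintype.card V := by
    have h1 : 1 ≤ a ^ s := Nat.one_le_pow _ _ ha
    calc D = 1 * D := (one_mul D).symm
      _ ≤ a ^ s * D := Nat.mul_le_mul_right D h1
      _ ≤ Fintype.card V := le_trans (Nat.le_add_left _ _) hcard
  have hsA : s ≤ A.card := by
    rcases ramsey_spec s (G.cliqueNum + 1) V G hDcard with ⟨I₀, h1, h2⟩ | hcl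
    · rw [hAcard, ← h2]; exact hstable_le _ h1
    · exact absurd ⟨_, hcl.choose_spec⟩ hclique
  have hsa : s ≤ a := hsA.trans hAa
  have ha2 : 2 ≤ a := hs.trans hsa
  -- the neighbourhood-in-`A` map, the big-degree set `B` and the rest `R`
  set nbrA : V → Finset V := fun v => A.filter (fun u => G.Adj v u) with hnbrA
  set B : Finset V := Finset.univ.filter (fun v => s ≤ (nbrA v).card) with hB
  set R : Finset V := Finset.univ \ B with hR
  -- `B` is covered by common neighbourhoods of stable `s`-subsets of `A`
  have hBsub : B ⊆ (A.powersetCard s).biUnion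
      (fun I => ((⋂ v ∈ I, G.neighborSet v).toFinite.toFinset)) := by
    intro v hv
    rw [hB, Finset.mem_filter] at hv
    obtain ⟨I, hIsub, hIcard⟩ := Finset.exists_subset_card_eq hv.2
    rw [Finset.mem_biUnion]
    refine ⟨I, ?_, ?_⟩
    · rw [Finset.mem_powersetCard]
      exact ⟨hIsub.trans (Finset.filter_subset _ _), hIcard⟩
    · rw [Set.Finite.mem_toFinset]
      simp only [Set.mem_iInter, SimpleGraph.mem_neighborSet]
      intro u hu
      have h2 := hIsub hu
      rw [hnbrA] at h2
      simp only [Finset.mem_filter] at h2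
      exact h2.2.symm
  have hNI : ∀ I ∈ A.powersetCard s,
      ((⋂ v ∈ I, G.neighborSet v).toFinite.toFinset).card ≤ q * a := by
    intro I hIm
    rw [Finset.mem_powersetCard] at hIm
    have hIst : IsStableSet G I := fun u hu v hv => hAstable u (hIm.1 hu) v (hIm.1 hv)
    have hchrom := hI I hIst hIm.2
    have hfin : ((⋂ v ∈ I, G.neighborSet v) : Set V).Finite := Set.toFinite _
    have hcol : (G.induce (⋂ v ∈ I, G.neighborSet v)).Colorable q := by
      have hnt : (G.induce (⋂ v ∈ I, G.neighborSet v)).chromaticNumber ≠ ⊤ := by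
        haveI : Fintype ↥(⋂ v ∈ I, G.neighborSet v) := hfin.fintype
        exact ne_top_of_le_ne_top (ENat.coe_ne_top _)
          ((G.induce _).colorable_of_fintype.chromaticNumber_le)
      rw [← SimpleGraph.chromaticNumber_le_iff_colorable, ← ENat.coe_toNat hnt]
      exact_mod_cast hchrom
    exact stable_color_count G _ hfin q a hcol hstable_le_a
  have hBcard : B.card ≤ (A.card.choose s) * (q * a) := by
    calc B.card ≤ ((A.powersetCard s).biUnion
          (fun I => ((⋂ v ∈ I, G.neighborSet v).toFinite.toFinset))).card :=
        Finset.card_le_card hBsub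
      _ ≤ ∑ I ∈ A.powersetCard s, ((⋂ v ∈ I, G.neighborSet v).toFinite.toFinset).card :=
        Finset.card_biUnion_le
      _ ≤ (A.powersetCard s).card * (q * a) := by
        simpa using Finset.sum_le_card_nsmul _ _ (q * a) hNI
      _ = A.card.choose s * (q * a) := by rw [Finset.card_powersetCard]
  -- fibers of the rest according to the neighbourhood in `A`
  set t : Finset (Finset V) := A.powerset.filter (fun S => S.card < s) with ht
  have hmapsto : ∀ v ∈ R, nbrA v ∈ t := by
    intro v hv
    rw [hR, Finset.mem_sdiff] at hv
    have h2 : ¬ s ≤ (nbrA v).card := by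
      intro h
      exact hv.2 (by rw [hB]; exact Finset.mem_filter.2 ⟨Finset.mem_univ _, h⟩)
    rw [ht, Finset.mem_filter]
    refine ⟨Finset.mem_powerset.2 ?_, by omega⟩
    rw [hnbrA]
    exact Finset.filter_subset _ _
  have hRsum : R.card = ∑ S ∈ t, (R.filter (fun v => nbrA v = S)).card :=
    Finset.card_eq_sum_card_fiberwise hmapsto
  have hfib0 : (R.filter (fun v => nbrA v = ∅)).card ≤ a := by
    have hsub : R.filter (fun v => nbrA v = ∅) ⊆ A := by
      intro v hv
      rw [Finset.mem_filter] at hv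
      by_contra hvA
      obtain ⟨u, huA, hadj⟩ := hAmax v hvA
      have hmem : u ∈ nbrA v := by rw [hnbrA]; exact Finset.mem_filter.2 ⟨huA, hadj⟩
      rw [hv.2] at hmem
      exact Finset.notMem_empty u hmem
    exact (Finset.card_le_card hsub).trans hAa
  obtain ⟨E, hE⟩ : ∃ E, D = E + 1 := ⟨D - 1, by omega⟩
  have hfib : ∀ S ∈ t.erase ∅, (R.filter (fun v => nbrA v = S)).card ≤ E := by
    intro S hS
    rw [Finset.mem_erase] at hS
    obtain ⟨hSne, hSt⟩ := hS
    rw [ht, Finset.mem_filter, Finset.mem_powerset] at hSt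
    by_contra hbig
    push_neg at hbig
    have hDle : D ≤ (R.filter (fun v => nbrA v = S)).card := by omega
    rcases ramsey_subset G s (G.cliqueNum + 1) _ hDle with ⟨I, hIsub, hIst, hIcard⟩ | hcl
    · have hIA : ∀ v ∈ I, v ∉ A := by
        intro v hvI hvA
        obtain ⟨u, huS⟩ := Finset.nonempty_iff_ne_empty.2 hSne
        have hvfib := hIsub hvI
        rw [Finset.mem_filter] at hvfib
        have hu2 : u ∈ nbrA v := by rw [hvfib.2]; exact huS
        rw [hnbrA] at hu2
        simp only [Finset.mem_filter] at hu2
        exact hAstable v hvA u hu2.1 hu2.2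
      have hdisj : Disjoint I (A \ S) := by
        rw [Finset.disjoint_left]
        intro v hvI hvAS
        exact hIA v hvI (Finset.mem_sdiff.1 hvAS).1
      have hstab2 : IsStableSet G (I ∪ (A \ S)) := by
        intro u hu v hv
        rw [Finset.mem_union] at hu hv
        rcases hu with hu | hu <;> rcases hv with hv | hv
        · exact hIst u hu v hv
        · rw [Finset.mem_sdiff] at hv
          intro hadj
          have hufib := hIsub hu
          rw [Finset.mem_filter] at hufib
          have hv2 : v ∈ nbrA u := by
            rw [hnbrA]; exact Finset.mem_filter.2 ⟨hv.1, hadj⟩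
          rw [hufib.2] at hv2
          exact hv.2 hv2
        · rw [Finset.mem_sdiff] at hu
          intro hadj
          have hvfib := hIsub hv
          rw [Finset.mem_filter] at hvfib
          have hu2 : u ∈ nbrA v := by
            rw [hnbrA]; exact Finset.mem_filter.2 ⟨hu.1, hadj.symm⟩
          rw [hvfib.2] at hu2
          exact hu.2 hu2
        · exact hAstable u (Finset.mem_sdiff.1 hu).1 v (Finset.mem_sdiff.1 hv).1
      have hcardU := hstable_le _ hstab2
      rw [Finset.card_union_of_disjoint hdisj, hIcard, Finset.card_sdiff_of_subset hSt.1,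
        ← hAcard] at hcardU
      have hSlt : S.card < s := hSt.2
      have hSA : S.card ≤ A.card := Finset.card_le_card hSt.1
      omega
    · exact hclique hcl
  have htcard : t.card ≤ ∑ k ∈ Finset.range s, A.card.choose k := by
    have hsub : t ⊆ (Finset.range s).biUnion (fun k => A.powersetCard k) := by
      intro S hS
      rw [ht, Finset.mem_filter, Finset.mem_powerset] at hS
      rw [Finset.mem_biUnion]
      exact ⟨S.card, Finset.mem_range.2 hS.2, Finset.mem_powersetCard.2 ⟨hS.1, rfl⟩⟩
    calc t.card ≤ _ := Finset.card_le_card hsub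
      _ ≤ ∑ k ∈ Finset.range s, (A.powersetCard k).card := Finset.card_biUnion_le
      _ = ∑ k ∈ Finset.range s, A.card.choose k := by
        simp [Finset.card_powersetCard]
  have hgeom : ∀ m : ℕ, 1 ≤ m → (∑ k ∈ Finset.range m, a ^ k) + 1 ≤ a ^ m := by
    intro m hm
    induction m with
    | zero => omega
    | succ m ihm =>
      rcases Nat.eq_or_lt_of_le hm with h1 | h1
      · obtain rfl : m = 0 := by omega
        simpa using ha2
      · have h2 := ihm (by omega)
        rw [Finset.sum_range_succ]
        have hps : a ^ m + a ^ m ≤ a ^ (m + 1) := by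
          calc a ^ m + a ^ m = a ^ m * 2 := by ring
            _ ≤ a ^ m * a := Nat.mul_le_mul_left _ ha2
            _ = a ^ (m + 1) := (pow_succ a m).symm
        omega
  have hsum_le : (∑ k ∈ Finset.range s, A.card.choose k) ≤ ∑ k ∈ Finset.range s, a ^ k :=
    Finset.sum_le_sum (fun k _ => (Nat.choose_le_choose k hAa).trans (Nat.choose_le_pow a k))
  set M := (t.erase ∅).card with hM
  have h0t : (∅ : Finset V) ∈ t := by
    rw [ht, Finset.mem_filter]
    exact ⟨Finset.empty_mem_powerset A, by simp only [Finset.card_empty]; omega⟩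
  have hsumsplit : ∑ S ∈ t, (R.filter (fun v => nbrA v = S)).card
      = (R.filter (fun v => nbrA v = ∅)).card
        + ∑ S ∈ t.erase ∅, (R.filter (fun v => nbrA v = S)).card :=
    (Finset.add_sum_erase t _ h0t).symm
  have hMsum : ∑ S ∈ t.erase ∅, (R.filter (fun v => nbrA v = S)).card ≤ M * E := by
    simpa using Finset.sum_le_card_nsmul _ _ E hfib
  have hMbound : M + 2 ≤ a ^ s := by
    have h1 : M + 1 ≤ t.card := by
      have he1 := Finset.card_erase_of_mem h0t
      have he2 : 1 ≤ t.card := Finset.card_pos.2 ⟨∅, h0t⟩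
      omega
    have h2 := htcard.trans hsum_le
    have h3 := hgeom s (by omega)
    linarith
  have hRfinal : R.card ≤ a + M * E := by
    rw [hRsum, hsumsplit]
    exact Nat.add_le_add hfib0 hMsum
  have hBfinal : B.card ≤ a.choose s * (q * a) :=
    hBcard.trans (Nat.mul_le_mul_right _ (Nat.choose_le_choose s hAa))
  have heq : R.card + B.card = Fintype.card V := by
    rw [hR, Finset.card_sdiff_add_card_eq_card (Finset.subset_univ B), Finset.card_univ]
  have hME : M * E + 2 * E ≤ a ^ s * E := by
    calc M * E + 2 * E = (M + 2) * E := by ring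
      _ ≤ a ^ s * E := Nat.mul_le_mul_right E hMbound
  have hpow : a + 1 ≤ a ^ s := by
    calc a + 1 ≤ a * a := by nlinarith
      _ = a ^ 2 := (sq a).symm
      _ ≤ a ^ s := Nat.pow_le_pow_right (by omega) hs
  have hDexp : a ^ s * D = a ^ s * E + a ^ s := by rw [hE]; ring
  have h1 : a * a.choose s * q + (a ^ s * E + a ^ s) ≤ Fintype.card V := by
    rw [← hDexp]; exact hcard
  have h3 : a.choose s * (q * a) = a * a.choose s * q := by ring
  linarith
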